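/- Let n, k ∈ ℝ³ and Θ ∈ ℝ. If ⟨n,n⟩ = −1 and O = exp(Θ J(n)), then (O − O⁻¹)/2 = sin Θ · J(n); if ⟨n,n⟩ = +1 and O = exp(Θ J(n)), then (O − O⁻¹)/2 = sinh Θ · J(n); and if ⟨k,k⟩ = 0 and O = exp(J(k)), then (O − O⁻¹)/2 = J(k). -/

import Mathlib

open Matrix

noncomputable section

/-- Tangent metric `η_T = diag(-1,1,1)` on `ℝ³`. -/
def etaT : Matrix (Fin 3) (Fin 3) ℝ := Matrix.diagonal ![-1, 1, 1]

/-- Tangent bilinear form `⟨u,w⟩ = uᵀ η_T w`. -/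
def ipT (u w : Fin 3 → ℝ) : ℝ := u ⬝ᵥ (etaT *ᵥ w)

/-- The map `J : ℝ³ → M₃(ℝ)` implementing the Lorentzian cross product, `J(u)w = u × w`. -/
def Jmat (u : Fin 3 → ℝ) : Matrix (Fin 3) (Fin 3) ℝ :=
  !![0, u 2, -u 1; u 2, 0, -u 0; -u 1, u 0, 0]

attribute [local instance] Matrix.linftyOpNormedAddCommGroup Matrix.linftyOpNormedRing
  Matrix.linftyOpNormedAlgebra

lemma Jmat_cube (u : Fin 3 → ℝ) : Jmat u * Jmat u * Jmat u = ipT u u • Jmat u := by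
  have h : ipT u u = -(u 0 * u 0) + (u 1 * u 1 + u 2 * u 2) := by
    simp [ipT, etaT, Matrix.mulVec, dotProduct, Fin.sum_univ_three]
    ring
  rw [h]
  ext i j
  fin_cases i <;> fin_cases j <;>
    simp [Jmat, Matrix.mul_apply, Fin.sum_univ_three] <;> ring

lemma exp_smul_closed_form (J : Matrix (Fin 3) (Fin 3) ℝ) (c : ℝ) (hJ : J * J * J = c • J)
    (f g : ℝ → ℝ) (hf : ∀ t, HasDerivAt f (1 + c * g t) t)
    (hg : ∀ t, HasDerivAt g (f t) t) (hf0 : f 0 = 0) (hg0 : g 0 = 0) (t : ℝ) :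
    NormedSpace.exp (t • J) = 1 + f t • J + g t • (J * J) := by
  set v : ℝ → Matrix (Fin 3) (Fin 3) ℝ := fun s => 1 + f s • J + g s • (J * J) with hv
  set h : ℝ → Matrix (Fin 3) (Fin 3) ℝ := fun s => NormedSpace.exp (s • (-J)) * v s with hh
  have hder : ∀ s, HasDerivAt h 0 s := by
    intro s
    have h1 : HasDerivAt (fun u : ℝ => NormedSpace.exp (u • (-J)))
        (NormedSpace.exp (s • (-J)) * (-J)) s := hasDerivAt_exp_smul_const (-J) s
    have h2 : HasDerivAt v ((1 + c * g s) • J + f s • (J * J)) s := by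
      have hx := ((hf s).smul_const J).fun_add ((hg s).smul_const (J * J))
      have h0 : HasDerivAt (fun _ : ℝ => (1 : Matrix (Fin 3) (Fin 3) ℝ)) 0 s :=
        hasDerivAt_const _ _
      have h3 := h0.fun_add hx
      rw [zero_add] at h3
      exact h3.congr_of_eventuallyEq (Filter.Eventually.of_forall fun x => by simp [hv, add_assoc])
    have key : (-J) * v s + ((1 + c * g s) • J + f s • (J * J)) = 0 := by
      have hJ3 : J * (J * J) = c • J := by rw [← mul_assoc, hJ]
      simp only [hv, neg_mul, mul_add, mul_one, Matrix.mul_smul, hJ3]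
      module
    have := h1.mul h2
    rw [mul_assoc, ← mul_add, key, mul_zero] at this
    exact this
  have hconst : h t = h 0 :=
    is_const_of_deriv_eq_zero (fun x => (hder x).differentiableAt)
      (fun x => (hder x).deriv) t 0
  have h0 : h 0 = 1 := by
    simp [hh, hv, hf0, hg0, NormedSpace.exp_zero]
  have hinv : NormedSpace.exp (t • J) * NormedSpace.exp (t • (-J)) = 1 := by
    rw [smul_neg, ← Matrix.exp_add_of_commute _ _ (Commute.neg_right (Commute.refl (t • J))),
      add_neg_cancel, NormedSpace.exp_zero]
  calc NormedSpace.exp (t • J) = NormedSpace.exp (t • J) * h t := by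
        rw [hconst, h0, mul_one]
    _ = (NormedSpace.exp (t • J) * NormedSpace.exp (t • (-J))) * v t := by
        rw [hh, mul_assoc]
    _ = v t := by rw [hinv, one_mul]

/-- Antisymmetric parts: `(O - O⁻¹)/2 = sin Θ · J(n)` in the elliptic case,
`sinh Θ · J(n)` in the hyperbolic case, and `J(k)` in the parabolic case. -/
theorem antisymmetric_part_exp_J (n k : Fin 3 → ℝ) (Θ : ℝ) :
    (ipT n n = -1 →
      (1/2 : ℝ) • (NormedSpace.exp (Θ • Jmat n) - (NormedSpace.exp (Θ • Jmat n))⁻¹) =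
        Real.sin Θ • Jmat n) ∧
    (ipT n n = 1 →
      (1/2 : ℝ) • (NormedSpace.exp (Θ • Jmat n) - (NormedSpace.exp (Θ • Jmat n))⁻¹) =
        Real.sinh Θ • Jmat n) ∧
    (ipT k k = 0 →
      (1/2 : ℝ) • (NormedSpace.exp (Jmat k) - (NormedSpace.exp (Jmat k))⁻¹) = Jmat k) := by
  refine ⟨fun h => ?_, fun h => ?_, fun h => ?_⟩
  · have hJ : Jmat n * Jmat n * Jmat n = (-1 : ℝ) • Jmat n := by rw [← h]; exact Jmat_cube n
    have hf : ∀ t : ℝ, HasDerivAt Real.sin (1 + (-1) * (1 - Real.cos t)) t := by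
      intro t; simpa [mul_comm] using Real.hasDerivAt_sin t
    have hg : ∀ t : ℝ, HasDerivAt (fun t => 1 - Real.cos t) (Real.sin t) t := by
      intro t; simpa using (hasDerivAt_const t (1:ℝ)).fun_sub (Real.hasDerivAt_cos t)
    have hE := exp_smul_closed_form (Jmat n) (-1) hJ Real.sin (fun t => 1 - Real.cos t)
      hf hg Real.sin_zero (by simp)
    have hinv : (NormedSpace.exp (Θ • Jmat n))⁻¹ = NormedSpace.exp ((-Θ) • Jmat n) := by
      rw [← Matrix.exp_neg (Θ • Jmat n), neg_smul]
    rw [hinv, hE Θ, hE (-Θ)]; simp only [Real.sin_neg, Real.cos_neg]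
    module
  · have hJ : Jmat n * Jmat n * Jmat n = (1 : ℝ) • Jmat n := by rw [← h]; exact Jmat_cube n
    have hf : ∀ t : ℝ, HasDerivAt Real.sinh (1 + 1 * (Real.cosh t - 1)) t := by
      intro t; simpa using Real.hasDerivAt_sinh t
    have hg : ∀ t : ℝ, HasDerivAt (fun t => Real.cosh t - 1) (Real.sinh t) t := by
      intro t; simpa using (Real.hasDerivAt_cosh t).fun_sub (hasDerivAt_const t (1:ℝ))
    have hE := exp_smul_closed_form (Jmat n) 1 hJ Real.sinh (fun t => Real.cosh t - 1)
      hf hg Real.sinh_zero (by simp)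
    have hinv : (NormedSpace.exp (Θ • Jmat n))⁻¹ = NormedSpace.exp ((-Θ) • Jmat n) := by
      rw [← Matrix.exp_neg (Θ • Jmat n), neg_smul]
    rw [hinv, hE Θ, hE (-Θ)]; simp only [Real.sinh_neg, Real.cosh_neg]
    module
  · have hJ : Jmat k * Jmat k * Jmat k = (0 : ℝ) • Jmat k := by rw [← h]; exact Jmat_cube k
    have hf : ∀ t : ℝ, HasDerivAt (fun t : ℝ => t) (1 + 0 * (t^2/2)) t := by
      intro t; simpa using hasDerivAt_id' t
    have hg : ∀ t : ℝ, HasDerivAt (fun t : ℝ => t^2/2) t t := by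
      intro t; simpa using (hasDerivAt_pow 2 t).div_const 2
    have hE := exp_smul_closed_form (Jmat k) 0 hJ (fun t => t) (fun t => t^2/2)
      hf hg rfl (by norm_num)
    have h1 : Jmat k = (1:ℝ) • Jmat k := (one_smul _ _).symm
    have hinv : (NormedSpace.exp (Jmat k))⁻¹ = NormedSpace.exp ((-1 : ℝ) • Jmat k) := by
      rw [← Matrix.exp_neg (Jmat k), ← neg_one_smul ℝ (Jmat k)]
    rw [hinv, show NormedSpace.exp (Jmat k) = NormedSpace.exp ((1:ℝ) • Jmat k) by rw [one_smul],
      hE 1, hE (-1)]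
    norm_num
    module
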